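/- Let p/q = [a_1,…,a_n] be an irreducible fraction with 0 < p/q < 1, a_1 ≥ 2, and N = a_1 + ⋯ + a_n − 1. Then the F-polynomials satisfy F_{(q−p)/q}(y_1,…,y_N) = y_1 y_2 ⋯ y_N · F_{p/q}(y_1^{−1}, y_2^{−1},…, y_N^{−1}). -/

import Mathlib

/-!
Ancestral triangles of continued fractions (Yamada / Farey diagrams),
following "Cluster variables and Alexander polynomials of 2-bridge knots".
-/

noncomputable section

open scoped BigOperators

attribute [local instance] Classical.propDecidable

namespace TwoBridge

/-- The continued fraction `[a₁,…,aₙ] = 1/(a₁ + 1/(a₂ + ⋯ + 1/aₙ))`. -/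
def cf : List ℕ → ℚ
  | [] => 0
  | a :: t => 1 / ((a : ℚ) + cf t)

/-- Partial sums `l_k = a₁ + ⋯ + a_k`. -/
def ell (a : List ℕ) (k : ℕ) : ℕ := (a.take k).sum

/-- The index of the fan containing the `i`-th triangle (1-based): the least `k` with
`i ≤ l_k − 1`.  Fan 1 consists of `T_1, …, T_{a₁−1}` and, for `k ≥ 2`, fan `k` consists of
`T_{l_{k−1}}, …, T_{l_k − 1}`. -/
def fanIdx (a : List ℕ) (i : ℕ) : ℕ := sInf {k | i < ell a k}

/-- The `i`-th triangle (1-based) of the ancestral triangle of `[a₁,…,aₙ]` is a *right*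
triangle iff it lies in an odd-indexed fan (first `a₁ − 1` triangles are right, the next
`a₂` left, the next `a₃` right, and so on alternately). -/
def isRight (a : List ℕ) (i : ℕ) : Prop := Odd (fanIdx a i)

/-- Vertex indices of the ancestral triangle: `0 ↦ 0/1`, `1 ↦ 1/1`, and `j + 1 ↦` the apex
(new vertex) of the triangle `T_j`.  `edgeIdx a i` is the pair of vertex indices
(left endpoint, right endpoint) of the most recently created edge after stacking `i`
triangles; the triangle `T_{i+1}` is stacked on this edge. -/
def edgeIdx (a : List ℕ) : ℕ → ℕ × ℕ
  | 0 => (0, 1)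
  | i + 1 => if isRight a (i + 1) then ((edgeIdx a i).1, i + 2) else (i + 2, (edgeIdx a i).2)

/-- The labels (numerator, denominator) of the endpoints of the active edge after stacking
`i` triangles; the new vertex of each triangle is labelled by the mediant of the two
endpoints of the edge it is stacked on. -/
def edgeLbl (a : List ℕ) : ℕ → (ℕ × ℕ) × (ℕ × ℕ)
  | 0 => ((0, 1), (1, 1))
  | i + 1 =>
      if isRight a (i + 1) then
        ((edgeLbl a i).1,
          ((edgeLbl a i).1.1 + (edgeLbl a i).2.1, (edgeLbl a i).1.2 + (edgeLbl a i).2.2))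
      else
        (((edgeLbl a i).1.1 + (edgeLbl a i).2.1, (edgeLbl a i).1.2 + (edgeLbl a i).2.2),
          (edgeLbl a i).2)

/-- The label (numerator, denominator) of the vertex with index `v`. -/
def vtxLabel (a : List ℕ) (v : ℕ) : ℕ × ℕ :=
  if v = 0 then (0, 1)
  else if v = 1 then (1, 1)
  else ((edgeLbl a (v - 2)).1.1 + (edgeLbl a (v - 2)).2.1,
        (edgeLbl a (v - 2)).1.2 + (edgeLbl a (v - 2)).2.2)

/-- `u` and `w` are joined by an edge of the ancestral triangle. -/
def IsEdgeAT (a : List ℕ) (u w : ℕ) : Prop :=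
  (u = 0 ∧ w = 1) ∨ (u = 1 ∧ w = 0) ∨
    (2 ≤ u ∧ (w = (edgeIdx a (u - 2)).1 ∨ w = (edgeIdx a (u - 2)).2)) ∨
    (2 ≤ w ∧ (u = (edgeIdx a (w - 2)).1 ∨ u = (edgeIdx a (w - 2)).2))

/-- A step of a path: an edge of the ancestral triangle along which the denominator of the
vertex label strictly decreases. -/
def IsStep (a : List ℕ) (u w : ℕ) : Prop :=
  IsEdgeAT a u w ∧ (vtxLabel a w).2 < (vtxLabel a u).2

/-- `IsPathFrom a s γ` : `γ` is a path of the ancestral triangle of `a` starting at the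
vertex with index `s` and ending at `0/1` or `1/1`, the denominator of the label strictly
decreasing along every edge. -/
def IsPathFrom (a : List ℕ) (s : ℕ) (γ : List ℕ) : Prop :=
  γ.head? = some s ∧ (γ.getLast? = some 0 ∨ γ.getLast? = some 1) ∧ List.Chain' (IsStep a) γ

/-- The (indices of the) triangles cut off to the left of the path by a single step from
vertex `u` down to vertex `w`. -/
def stepLeft (a : List ℕ) (u w : ℕ) : Finset ℕ :=
  if 2 ≤ u ∧ w = (edgeIdx a (u - 2)).2 then Finset.Ioc (w - 1) (u - 1) else ∅

/-- The set `S_γ` of (indices of) triangles lying on the left side of the path `γ`. -/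
def pathLeftSet (a : List ℕ) (γ : List ℕ) : Finset ℕ :=
  (γ.zip γ.tail).foldr (fun p s => stepLeft a p.1 p.2 ∪ s) ∅


/-- The `F`-polynomial `F_{p/q} = Σ_{γ ∈ Γ_{p/q}} ∏_{T_i ∈ S_γ} y_i` of `p/q = [a₁,…,aₙ]`
(the variable `y_i` is `MvPolynomial.X i`; the top vertex has index `a.sum = N + 1`).
For the empty continued fraction this gives `1`. -/
def Fpoly (a : List ℕ) : MvPolynomial ℕ ℤ :=
  ∑ᶠ γ ∈ {γ : List ℕ | IsPathFrom a a.sum γ},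
    ∏ i ∈ pathLeftSet a γ, (MvPolynomial.X i : MvPolynomial ℕ ℤ)

/-- `F`-polynomial with the convention `F[a₁,…,a_{n−1},0] = F[a₁,…,a_{n−2}]`. -/
def FpolyC (l : List ℕ) : MvPolynomial ℕ ℤ :=
  if l.getLast? = some 0 then Fpoly l.dropLast.dropLast else Fpoly l

/-! ### general structural lemmas -/


lemma edgeIdx_bound (b : List ℕ) (i : ℕ) :
    (edgeIdx b i).1 ≤ i + 1 ∧ (edgeIdx b i).2 ≤ i + 1 ∧ (edgeIdx b i).1 ≠ (edgeIdx b i).2 := by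
  induction i with
  | zero => simp [edgeIdx]
  | succ i ih =>
    rw [edgeIdx]
    split <;> simp <;> omega

lemma edgeLbl_den_pos (b : List ℕ) (i : ℕ) :
    1 ≤ (edgeLbl b i).1.2 ∧ 1 ≤ (edgeLbl b i).2.2 := by
  induction i with
  | zero => simp [edgeLbl]
  | succ i ih =>
    rw [edgeLbl]
    split <;> simp <;> omega

lemma vtxLabel_edgeIdx (b : List ℕ) (i : ℕ) :
    vtxLabel b (edgeIdx b i).1 = (edgeLbl b i).1 ∧
      vtxLabel b (edgeIdx b i).2 = (edgeLbl b i).2 := by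
  induction i with
  | zero => simp [edgeIdx, edgeLbl, vtxLabel]
  | succ i ih =>
    rw [edgeIdx, edgeLbl]
    split
    · refine ⟨ih.1, ?_⟩
      simp [vtxLabel]
    · refine ⟨?_, ih.2⟩
      simp [vtxLabel]

lemma vtxLabel_apex (b : List ℕ) (i : ℕ) :
    vtxLabel b (i + 2) =
      ((edgeLbl b i).1.1 + (edgeLbl b i).2.1, (edgeLbl b i).1.2 + (edgeLbl b i).2.2) := by
  simp [vtxLabel]

lemma den_edge_lt (b : List ℕ) (i : ℕ) (j : ℕ) (hj : j = (edgeIdx b i).1 ∨ j = (edgeIdx b i).2) :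
    (vtxLabel b j).2 < (vtxLabel b (i + 2)).2 := by
  have h1 := (vtxLabel_edgeIdx b i).1
  have h2 := (vtxLabel_edgeIdx b i).2
  have hd := edgeLbl_den_pos b i
  rw [vtxLabel_apex]
  rcases hj with rfl | rfl
  · rw [h1]; omega
  · rw [h2]; omega

lemma isStep_iff (b : List ℕ) (u w : ℕ) :
    IsStep b u w ↔
      2 ≤ u ∧ (w = (edgeIdx b (u - 2)).1 ∨ w = (edgeIdx b (u - 2)).2) ∧
        (vtxLabel b w).2 < (vtxLabel b u).2 := by
  constructor
  · rintro ⟨he, hd⟩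
    rcases he with ⟨rfl, rfl⟩ | ⟨rfl, rfl⟩ | ⟨hu, hw⟩ | ⟨hw2, hu⟩
    · simp [vtxLabel] at hd
    · simp [vtxLabel] at hd
    · exact ⟨hu, hw, hd⟩
    · exfalso
      have := den_edge_lt b (w - 2) u hu
      rw [show w - 2 + 2 = w by omega] at this
      omega
  · rintro ⟨hu, hw, hd⟩
    exact ⟨Or.inr (Or.inr (Or.inl ⟨hu, hw⟩)), hd⟩

lemma isStep_lt {b : List ℕ} {u w : ℕ} (h : IsStep b u w) : w < u := by
  rcases (isStep_iff b u w).1 h with ⟨hu, hw, -⟩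
  have := edgeIdx_bound b (u - 2)
  omega



lemma chain_bounded (b : List ℕ) :
    ∀ (γ : List ℕ) (u : ℕ), γ.head? = some u → List.Chain' (IsStep b) γ →
      ∀ v ∈ γ, v ≤ u := by
  intro γ
  induction γ with
  | nil => intro u h; simp at h
  | cons x t ih =>
    intro u h hc v hv
    obtain rfl : x = u := by simpa using h
    rcases List.mem_cons.mp hv with rfl | hvt
    · exact le_refl v
    · cases t with
      | nil => simp at hvt
      | cons y t' =>
        rw [List.Chain', List.isChain_cons_cons] at hc
        have hyx : y < x := isStep_lt hc.1
        have := ih y rfl hc.2 v hvt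
        omega

/-- The triangles cut off to the *right* of the path by a step from `u` to `w`. -/
def stepRight (a : List ℕ) (u w : ℕ) : Finset ℕ :=
  if 2 ≤ u ∧ w = (edgeIdx a (u - 2)).1 then Finset.Ioc (w - 1) (u - 1) else ∅

def pathRightSet (a : List ℕ) (γ : List ℕ) : Finset ℕ :=
  (γ.zip γ.tail).foldr (fun p s => stepRight a p.1 p.2 ∪ s) ∅

lemma pathLeftSet_cons_cons (b : List ℕ) (x y : ℕ) (t : List ℕ) :
    pathLeftSet b (x :: y :: t) = stepLeft b x y ∪ pathLeftSet b (y :: t) := rfl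

lemma pathRightSet_cons_cons (b : List ℕ) (x y : ℕ) (t : List ℕ) :
    pathRightSet b (x :: y :: t) = stepRight b x y ∪ pathRightSet b (y :: t) := rfl

lemma Ioc_disjoint (a b c : ℕ) : Disjoint (Finset.Ioc a b) (Finset.Ioc b c) := by
  simp only [Finset.disjoint_left, Finset.mem_Ioc]
  omega

lemma partition (b : List ℕ) :
    ∀ (γ : List ℕ) (u : ℕ), γ.head? = some u →
      (γ.getLast? = some 0 ∨ γ.getLast? = some 1) → List.Chain' (IsStep b) γ →
      pathLeftSet b γ ∪ pathRightSet b γ = Finset.Ioc 0 (u - 1) ∧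
        Disjoint (pathLeftSet b γ) (pathRightSet b γ) := by
  intro γ
  induction γ with
  | nil => intro u h; simp at h
  | cons x t ih =>
    intro u hh hl hc
    obtain rfl : x = u := by simpa using hh
    cases t with
    | nil =>
      have h01 : x = 0 ∨ x = 1 := by simpa using hl
      have hu0 : x - 1 = 0 := by omega
      simp [pathLeftSet, pathRightSet, hu0]
    | cons y t' =>
      rw [List.Chain', List.isChain_cons_cons] at hc
      have hrec := ih y rfl (by rwa [List.getLast?_cons_cons] at hl) hc.2
      rcases (isStep_iff b x y).1 hc.1 with ⟨hu2, hy, -⟩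
      have hb := edgeIdx_bound b (x - 2)
      have hPl : pathLeftSet b (y :: t') ⊆ Finset.Ioc 0 (y - 1) :=
        hrec.1 ▸ Finset.subset_union_left
      have hPr : pathRightSet b (y :: t') ⊆ Finset.Ioc 0 (y - 1) :=
        hrec.1 ▸ Finset.subset_union_right
      have hIdisj : Disjoint (Finset.Ioc 0 (y - 1)) (Finset.Ioc (y - 1) (x - 1)) :=
        Ioc_disjoint _ _ _
      rcases hy with hyL | hyR
      · have hsl : stepLeft b x y = ∅ := by
          rw [stepLeft, if_neg]
          rintro ⟨-, h⟩
          exact hb.2.2 (by rw [← hyL, h])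
        have hsr : stepRight b x y = Finset.Ioc (y - 1) (x - 1) := by
          rw [stepRight, if_pos ⟨hu2, hyL⟩]
        rw [pathLeftSet_cons_cons, pathRightSet_cons_cons, hsl, hsr, Finset.empty_union]
        constructor
        · rw [Finset.union_left_comm, hrec.1, Finset.union_comm,
            Finset.Ioc_union_Ioc_eq_Ioc (Nat.zero_le _) (by omega)]
        · exact Finset.disjoint_union_right.mpr
            ⟨Finset.disjoint_of_subset_left hPl hIdisj, hrec.2⟩
      · have hsl : stepLeft b x y = Finset.Ioc (y - 1) (x - 1) := by
          rw [stepLeft, if_pos ⟨hu2, hyR⟩]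
        have hsr : stepRight b x y = ∅ := by
          rw [stepRight, if_neg]
          rintro ⟨-, h⟩
          exact hb.2.2 (by rw [← hyR, h])
        rw [pathLeftSet_cons_cons, pathRightSet_cons_cons, hsl, hsr, Finset.empty_union]
        constructor
        · rw [Finset.union_assoc, hrec.1, Finset.union_comm,
            Finset.Ioc_union_Ioc_eq_Ioc (Nat.zero_le _) (by omega)]
        · exact Finset.disjoint_union_left.mpr
            ⟨(Finset.disjoint_of_subset_right hPr hIdisj.symm), hrec.2⟩

lemma pathRightSet_eq (b : List ℕ) (γ : List ℕ) (u : ℕ) (hh : γ.head? = some u)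
    (hl : γ.getLast? = some 0 ∨ γ.getLast? = some 1) (hc : List.Chain' (IsStep b) γ) :
    pathRightSet b γ = Finset.Ioc 0 (u - 1) \ pathLeftSet b γ := by
  have h := partition b γ u hh hl hc
  rw [← h.1, Finset.union_sdiff_cancel_left h.2]

lemma pathLeftSet_subset (b : List ℕ) (γ : List ℕ) (u : ℕ) (hh : γ.head? = some u)
    (hl : γ.getLast? = some 0 ∨ γ.getLast? = some 1) (hc : List.Chain' (IsStep b) γ) :
    pathLeftSet b γ ⊆ Finset.Ioc 0 (u - 1) :=
  (partition b γ u hh hl hc).1 ▸ Finset.subset_union_left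

lemma pathSet_finite (b : List ℕ) (s : ℕ) : {γ : List ℕ | IsPathFrom b s γ}.Finite := by
  haveI : Std.Antisymm (α := ℕ) (· > ·) := ⟨fun a b h1 h2 => absurd h2 (lt_asymm h1)⟩
  haveI : Std.Irrefl (α := ℕ) (· > ·) := ⟨fun a => lt_irrefl a⟩
  have hsorted : ∀ γ ∈ {γ : List ℕ | IsPathFrom b s γ}, List.Pairwise (· > ·) γ := by
    rintro γ ⟨-, -, hc⟩
    exact List.isChain_iff_pairwise.mp (List.IsChain.imp (fun _ _ h => isStep_lt h) hc)
  apply Set.Finite.of_finite_image (f := fun γ => γ.toFinset)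
  · apply Set.Finite.subset ((Finset.range (s + 1)).powerset.finite_toSet)
    rintro t ⟨γ, hγ, rfl⟩
    simp only [Finset.coe_powerset, Set.mem_preimage, Set.mem_powerset_iff, Finset.coe_subset,
      Finset.mem_coe, Finset.subset_iff, List.mem_toFinset, Finset.mem_range]
    intro v hv
    have := chain_bounded b γ s hγ.1 hγ.2.2 v hv
    omega
  · intro γ1 h1 γ2 h2 he
    have s1 := hsorted γ1 h1
    have s2 := hsorted γ2 h2
    exact List.Perm.eq_of_pairwise' s1 s2
      (List.perm_of_nodup_nodup_toFinset_eq s1.nodup s2.nodup he)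

/-- mirror involution on vertex indices -/
def sig (v : ℕ) : ℕ := if v = 0 then 1 else if v = 1 then 0 else v

lemma sig_sig (v : ℕ) : sig (sig v) = v := by
  rcases v with _ | _ | v <;> simp [sig]

lemma sig_of_two_le {v : ℕ} (h : 2 ≤ v) : sig v = v := by
  rcases v with _ | _ | v <;> simp [sig] <;> omega

lemma sig_inj : Function.Injective sig :=
  Function.LeftInverse.injective sig_sig

lemma sig_le {v m : ℕ} (h2 : 2 ≤ m) (h : v ≤ m) : sig v ≤ m := by
  rcases v with _ | _ | v <;> simp [sig] <;> omega

section Mirror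
variable {a1 : ℕ} {rest : List ℕ}

lemma ell_mirror (h1 : 1 ≤ a1) (j : ℕ) :
    ell (1 :: (a1 - 1) :: rest) (j + 2) = ell (a1 :: rest) (j + 1) := by
  simp [ell, List.take_cons]
  omega

lemma sum_eq_ell (a : List ℕ) : ell a a.length = a.sum := by
  simp [ell]

lemma fanIdx_mirror (h2 : 2 ≤ a1) {i : ℕ} (hi1 : 1 ≤ i) (hiN : i < (a1 :: rest).sum) :
    fanIdx (1 :: (a1 - 1) :: rest) i = fanIdx (a1 :: rest) i + 1 := by
  set a := a1 :: rest with ha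
  set a' := 1 :: (a1 - 1) :: rest with ha'
  have hne : a.length ∈ {k | i < ell a k} := by
    simp only [Set.mem_setOf_eq, sum_eq_ell]; exact hiN
  have hmem : fanIdx a i ∈ {k | i < ell a k} := Nat.sInf_mem ⟨_, hne⟩
  set m := fanIdx a i with hm
  have hm1 : 1 ≤ m := by
    rcases Nat.eq_zero_or_pos m with h | h
    · exfalso; rw [h] at hmem; simp [ell] at hmem
    · exact h
  have hmem' : m + 1 ∈ {k | i < ell a' k} := by
    simp only [Set.mem_setOf_eq]
    obtain ⟨j, hj⟩ : ∃ j, m = j + 1 := ⟨m - 1, by omega⟩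
    rw [hj, show j + 1 + 1 = j + 2 by ring, ell_mirror (by omega), ← hj]
    exact hmem
  refine le_antisymm (Nat.sInf_le hmem') (le_csInf ⟨_, hmem'⟩ ?_)
  intro k hk
  simp only [Set.mem_setOf_eq] at hk
  have hk2 : 2 ≤ k := by
    by_contra h
    interval_cases k <;> simp [ell, ha'] at hk <;> omega
  obtain ⟨j, rfl⟩ : ∃ j, k = j + 2 := ⟨k - 2, by omega⟩
  rw [ell_mirror (by omega)] at hk
  have : m ≤ j + 1 := Nat.sInf_le hk
  omega

lemma isRight_mirror (h2 : 2 ≤ a1) {i : ℕ} (hi1 : 1 ≤ i) (hiN : i < (a1 :: rest).sum) :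
    isRight (1 :: (a1 - 1) :: rest) i ↔ ¬ isRight (a1 :: rest) i := by
  rw [isRight, isRight, fanIdx_mirror h2 hi1 hiN, Nat.odd_add_one]

lemma sum_ge_two (h2 : 2 ≤ a1) : 2 ≤ (a1 :: rest).sum := by
  simp [List.sum_cons]; omega

lemma sum_mirror (h2 : 2 ≤ a1) : (1 :: (a1 - 1) :: rest).sum = (a1 :: rest).sum := by
  simp [List.sum_cons]; omega

lemma edgeIdx_mirror (h2 : 2 ≤ a1) :
    ∀ i, i < (a1 :: rest).sum →
      edgeIdx (1 :: (a1 - 1) :: rest) i =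
        (sig (edgeIdx (a1 :: rest) i).2, sig (edgeIdx (a1 :: rest) i).1) := by
  intro i
  induction i with
  | zero => intro _; simp [edgeIdx, sig]
  | succ i ih =>
    intro hi
    have ih' := ih (by omega)
    have hflip := isRight_mirror (rest := rest) h2 (i := i + 1) (by omega) hi
    by_cases h : isRight (a1 :: rest) (i + 1)
    · rw [edgeIdx, if_neg (by rw [hflip]; exact not_not_intro h), edgeIdx, if_pos h, ih']
      simp [sig_of_two_le (show 2 ≤ i + 2 by omega)]
    · rw [edgeIdx, if_pos (hflip.mpr h), edgeIdx, if_neg h, ih']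
      simp [sig_of_two_le (show 2 ≤ i + 2 by omega)]

lemma edgeLbl_mirror (h2 : 2 ≤ a1) :
    ∀ i, i < (a1 :: rest).sum →
      (edgeLbl (1 :: (a1 - 1) :: rest) i).1.2 = (edgeLbl (a1 :: rest) i).2.2 ∧
        (edgeLbl (1 :: (a1 - 1) :: rest) i).2.2 = (edgeLbl (a1 :: rest) i).1.2 := by
  intro i
  induction i with
  | zero => intro _; simp [edgeLbl]
  | succ i ih =>
    intro hi
    have ih' := ih (by omega)
    have hflip := isRight_mirror (rest := rest) h2 (i := i + 1) (by omega) hi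
    by_cases h : isRight (a1 :: rest) (i + 1)
    · rw [edgeLbl, if_neg (by rw [hflip]; exact not_not_intro h), edgeLbl, if_pos h]
      simp only
      omega
    · rw [edgeLbl, if_pos (hflip.mpr h), edgeLbl, if_neg h]
      simp only
      omega

lemma vtxden_mirror (h2 : 2 ≤ a1) {v : ℕ} (hv : v ≤ (a1 :: rest).sum) :
    (vtxLabel (1 :: (a1 - 1) :: rest) (sig v)).2 = (vtxLabel (a1 :: rest) v).2 := by
  have hs2 := sum_ge_two (rest := rest) h2
  rcases Nat.lt_or_ge v 2 with h | h
  · interval_cases v <;> simp [sig, vtxLabel]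
  · rw [sig_of_two_le h]
    obtain ⟨j, rfl⟩ : ∃ j, v = j + 2 := ⟨v - 2, by omega⟩
    rw [vtxLabel_apex, vtxLabel_apex]
    have := edgeLbl_mirror (rest := rest) h2 j (by omega)
    omega

lemma isStep_mirror (h2 : 2 ≤ a1) {u w : ℕ} (hu : u ≤ (a1 :: rest).sum) :
    IsStep (a1 :: rest) u w ↔ IsStep (1 :: (a1 - 1) :: rest) (sig u) (sig w) := by
  have hs2 := sum_ge_two (rest := rest) h2
  rw [isStep_iff, isStep_iff]
  constructor
  · rintro ⟨hu2, hw, hden⟩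
    have hb := edgeIdx_bound (a1 :: rest) (u - 2)
    have hwle : w ≤ (a1 :: rest).sum := by omega
    have he := edgeIdx_mirror (rest := rest) h2 (u - 2) (by omega)
    rw [sig_of_two_le hu2]
    refine ⟨hu2, ?_, ?_⟩
    · rw [he]
      rcases hw with h | h
      · exact Or.inr (by rw [h])
      · exact Or.inl (by rw [h])
    · have hdw := vtxden_mirror (rest := rest) h2 hwle
      have hdu := vtxden_mirror (rest := rest) h2 hu
      rw [sig_of_two_le hu2] at hdu
      rw [hdw, hdu]
      exact hden
  · rintro ⟨hu2, hw, hden⟩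
    have hu2' : 2 ≤ u := by
      by_contra hc
      rcases (show u = 0 ∨ u = 1 by omega) with rfl | rfl <;> simp [sig] at hu2
    rw [sig_of_two_le hu2'] at hw hden
    have he := edgeIdx_mirror (rest := rest) h2 (u - 2) (by omega)
    rw [he] at hw
    have hb := edgeIdx_bound (a1 :: rest) (u - 2)
    have hw' : w = (edgeIdx (a1 :: rest) (u - 2)).1 ∨ w = (edgeIdx (a1 :: rest) (u - 2)).2 := by
      rcases hw with h | h
      · exact Or.inr (sig_inj h)
      · exact Or.inl (sig_inj h)
    have hwle : w ≤ (a1 :: rest).sum := by omega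
    have hdw := vtxden_mirror (rest := rest) h2 hwle
    have hdu := vtxden_mirror (rest := rest) h2 hu
    rw [sig_of_two_le hu2'] at hdu
    rw [hdw, hdu] at hden
    exact ⟨hu2', hw', hden⟩

lemma sig_sub_one (y : ℕ) : sig y - 1 = y - 1 := by
  rcases y with _ | _ | y <;> simp [sig]

lemma stepLeft_mirror (h2 : 2 ≤ a1) {x y : ℕ} (hx : x ≤ (a1 :: rest).sum) :
    stepLeft (1 :: (a1 - 1) :: rest) (sig x) (sig y) = stepRight (a1 :: rest) x y := by
  have hs2 := sum_ge_two (rest := rest) h2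
  by_cases hx2 : 2 ≤ x
  · rw [sig_of_two_le hx2]
    have he := edgeIdx_mirror (rest := rest) h2 (x - 2) (by omega)
    by_cases hy : y = (edgeIdx (a1 :: rest) (x - 2)).1
    · rw [stepRight, if_pos ⟨hx2, hy⟩, stepLeft,
        if_pos ⟨hx2, by rw [he]; exact congrArg sig hy⟩, sig_sub_one]
    · rw [stepRight, if_neg (by rintro ⟨-, h⟩; exact hy h), stepLeft, if_neg]
      rintro ⟨-, h⟩
      rw [he] at h
      exact hy (sig_inj h)
  · have hsx : sig x < 2 := by
      rcases (show x = 0 ∨ x = 1 by omega) with rfl | rfl <;> simp [sig]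
    rw [stepLeft, if_neg (by rintro ⟨h, -⟩; omega), stepRight, if_neg (by rintro ⟨h, -⟩; omega)]

lemma pathLeftSet_mirror (h2 : 2 ≤ a1) :
    ∀ γ : List ℕ, (∀ v ∈ γ, v ≤ (a1 :: rest).sum) →
      pathLeftSet (1 :: (a1 - 1) :: rest) (γ.map sig) = pathRightSet (a1 :: rest) γ := by
  intro γ
  induction γ with
  | nil => intro _; simp [pathLeftSet, pathRightSet]
  | cons x t ih =>
    intro hb
    cases t with
    | nil => simp [pathLeftSet, pathRightSet]
    | cons y t' =>
      have hmap : (x :: y :: t').map sig = sig x :: sig y :: (t'.map sig) := rfl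
      rw [hmap, pathLeftSet_cons_cons, pathRightSet_cons_cons,
        stepLeft_mirror h2 (hb x (by simp)), show sig y :: (t'.map sig) = (y :: t').map sig from rfl,
        ih (fun v hv => hb v (List.mem_cons_of_mem _ hv))]

lemma chain_mirror (h2 : 2 ≤ a1) :
    ∀ γ : List ℕ, (∀ v ∈ γ, v ≤ (a1 :: rest).sum) → List.Chain' (IsStep (a1 :: rest)) γ →
      List.Chain' (IsStep (1 :: (a1 - 1) :: rest)) (γ.map sig) := by
  intro γ
  induction γ with
  | nil => intro _ _; simp [List.Chain']
  | cons x t ih =>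
    intro hb hc
    cases t with
    | nil => simp [List.Chain']
    | cons y t' =>
      rw [List.Chain', List.isChain_cons_cons] at hc
      have hmap : (x :: y :: t').map sig = sig x :: sig y :: (t'.map sig) := rfl
      rw [hmap, List.Chain', List.isChain_cons_cons]
      exact ⟨(isStep_mirror h2 (hb x (by simp))).mp hc.1,
        ih (fun v hv => hb v (List.mem_cons_of_mem _ hv)) hc.2⟩

lemma chain_mirror' (h2 : 2 ≤ a1) :
    ∀ γ : List ℕ, (∀ v ∈ γ, v ≤ (a1 :: rest).sum) →
      List.Chain' (IsStep (1 :: (a1 - 1) :: rest)) γ →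
      List.Chain' (IsStep (a1 :: rest)) (γ.map sig) := by
  have hs2 := sum_ge_two (rest := rest) h2
  intro γ
  induction γ with
  | nil => intro _ _; simp [List.Chain']
  | cons x t ih =>
    intro hb hc
    cases t with
    | nil => simp [List.Chain']
    | cons y t' =>
      rw [List.Chain', List.isChain_cons_cons] at hc
      have hmap : (x :: y :: t').map sig = sig x :: sig y :: (t'.map sig) := rfl
      rw [hmap, List.Chain', List.isChain_cons_cons]
      refine ⟨?_, ih (fun v hv => hb v (List.mem_cons_of_mem _ hv)) hc.2⟩
      have := (isStep_mirror (rest := rest) h2 (u := sig x) (w := sig y)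
        (sig_le hs2 (hb x (by simp)))).mpr
      rw [sig_sig, sig_sig] at this
      exact this hc.1

lemma map_sig_sig (γ : List ℕ) : (γ.map sig).map sig = γ := by
  rw [List.map_map]
  simp [Function.comp_def, sig_sig]

lemma isPathFrom_mirror (h2 : 2 ≤ a1) {γ : List ℕ}
    (h : IsPathFrom (a1 :: rest) (a1 :: rest).sum γ) :
    IsPathFrom (1 :: (a1 - 1) :: rest) (a1 :: rest).sum (γ.map sig) := by
  have hs2 := sum_ge_two (rest := rest) h2
  obtain ⟨hh, hl, hc⟩ := h
  have hb := chain_bounded _ γ _ hh hc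
  refine ⟨?_, ?_, chain_mirror h2 γ hb hc⟩
  · rw [List.head?_map, hh, Option.map_some, sig_of_two_le hs2]
  · rw [List.getLast?_map]
    rcases hl with h | h <;> rw [h] <;> simp [sig]

lemma isPathFrom_mirror' (h2 : 2 ≤ a1) {γ : List ℕ}
    (h : IsPathFrom (1 :: (a1 - 1) :: rest) (a1 :: rest).sum γ) :
    IsPathFrom (a1 :: rest) (a1 :: rest).sum (γ.map sig) := by
  have hs2 := sum_ge_two (rest := rest) h2
  obtain ⟨hh, hl, hc⟩ := h
  have hb := chain_bounded _ γ _ hh hc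
  refine ⟨?_, ?_, chain_mirror' h2 γ hb hc⟩
  · rw [List.head?_map, hh, Option.map_some, sig_of_two_le hs2]
  · rw [List.getLast?_map]
    rcases hl with h | h <;> rw [h] <;> simp [sig]

lemma pathSet_mirror (h2 : 2 ≤ a1) :
    {γ : List ℕ | IsPathFrom (1 :: (a1 - 1) :: rest) (a1 :: rest).sum γ} =
      (fun γ : List ℕ => γ.map sig) '' {γ | IsPathFrom (a1 :: rest) (a1 :: rest).sum γ} := by
  ext γ
  constructor
  · intro h
    exact ⟨γ.map sig, isPathFrom_mirror' h2 h, map_sig_sig γ⟩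
  · rintro ⟨δ, hδ, rfl⟩
    exact isPathFrom_mirror h2 hδ

end Mirror


/-- **Corollary (mirror F-polynomial).**  Let `p/q = [a₁,…,aₙ]` be an irreducible fraction
with `0 < p/q < 1`, `a₁ ≥ 2`, and `N = a₁ + ⋯ + aₙ − 1`.  Then the `F`-polynomials
satisfy `F_{(q−p)/q}(y₁,…,y_N) = y₁ y₂ ⋯ y_N · F_{p/q}(y₁⁻¹, y₂⁻¹, …, y_N⁻¹)`
(an identity in the field of rational functions in the `y_i`, where
`(q−p)/q = [1, a₁−1, a₂,…,aₙ]`). -/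
theorem mirror_F_polynomial (a1 : ℕ) (rest : List ℕ) (p q : ℕ)
    (h2 : 2 ≤ a1) (hpos : ∀ x ∈ rest, 0 < x)
    (hp : 0 < p) (hlt : p < q) (hcop : Nat.Coprime p q)
    (hval : cf (a1 :: rest) = (p : ℚ) / q) :
    algebraMap (MvPolynomial ℕ ℤ) (FractionRing (MvPolynomial ℕ ℤ))
        (Fpoly (1 :: (a1 - 1) :: rest)) =
      (∏ i ∈ Finset.Icc 1 ((a1 :: rest).sum - 1),
          algebraMap (MvPolynomial ℕ ℤ) (FractionRing (MvPolynomial ℕ ℤ))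
            (MvPolynomial.X i)) *
        MvPolynomial.eval₂ (algebraMap ℤ (FractionRing (MvPolynomial ℕ ℤ)))
          (fun i =>
            (algebraMap (MvPolynomial ℕ ℤ) (FractionRing (MvPolynomial ℕ ℤ))
                (MvPolynomial.X i))⁻¹)
          (Fpoly (a1 :: rest)) := by
  classical
  have hs2 := sum_ge_two (rest := rest) h2
  set K := FractionRing (MvPolynomial ℕ ℤ) with hK
  set φ := algebraMap (MvPolynomial ℕ ℤ) K with hφ
  have hφinj : Function.Injective φ := IsFractionRing.injective (MvPolynomial ℕ ℤ) K
  have hXne : ∀ i : ℕ, φ (MvPolynomial.X i) ≠ 0 := fun i =>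
    (map_ne_zero_iff φ hφinj).mpr (MvPolynomial.X_ne_zero i)
  have hfin : {γ : List ℕ | IsPathFrom (a1 :: rest) (a1 :: rest).sum γ}.Finite :=
    pathSet_finite _ _
  set G : Finset (List ℕ) := hfin.toFinset with hG
  set N := (a1 :: rest).sum - 1 with hN
  have hIcc : Finset.Icc 1 N = Finset.Ioc 0 N := by
    ext i; simp [Finset.mem_Icc, Finset.mem_Ioc]; omega
  -- per-path facts
  have hpath : ∀ γ ∈ G, pathLeftSet (a1 :: rest) γ ⊆ Finset.Ioc 0 N := by
    intro γ hγ
    rw [hG, Set.Finite.mem_toFinset] at hγ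
    exact pathLeftSet_subset _ γ _ hγ.1 hγ.2.1 hγ.2.2
  -- Fpoly (a1 :: rest) as a finset sum
  have hFa : Fpoly (a1 :: rest) =
      ∑ γ ∈ G, ∏ i ∈ pathLeftSet (a1 :: rest) γ, (MvPolynomial.X i : MvPolynomial ℕ ℤ) := by
    rw [Fpoly, ← hfin.coe_toFinset, finsum_mem_coe_finset]
  -- Fpoly of the mirror as a finset sum of complements
  have hFa' : Fpoly (1 :: (a1 - 1) :: rest) =
      ∑ γ ∈ G, ∏ i ∈ Finset.Ioc 0 N \ pathLeftSet (a1 :: rest) γ,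
        (MvPolynomial.X i : MvPolynomial ℕ ℤ) := by
    rw [Fpoly, sum_mirror h2, pathSet_mirror h2,
      finsum_mem_image (fun γ1 _ γ2 _ h => by rw [← map_sig_sig γ1, h, map_sig_sig]),
      ← hfin.coe_toFinset, finsum_mem_coe_finset]
    apply Finset.sum_congr rfl
    intro γ hγ
    rw [Set.Finite.mem_toFinset] at hγ
    rw [pathLeftSet_mirror h2 γ (chain_bounded _ γ _ hγ.1 hγ.2.2),
      pathRightSet_eq _ γ _ hγ.1 hγ.2.1 hγ.2.2]
  -- evaluate both sides
  rw [hFa', hFa, hIcc, map_sum]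
  have hE : ∀ p : MvPolynomial ℕ ℤ,
      MvPolynomial.eval₂ (algebraMap ℤ K) (fun i => (φ (MvPolynomial.X i))⁻¹) p =
        MvPolynomial.eval₂Hom (algebraMap ℤ K) (fun i => (φ (MvPolynomial.X i))⁻¹) p :=
    fun _ => rfl
  rw [hE, map_sum, Finset.mul_sum]
  apply Finset.sum_congr rfl
  intro γ hγ
  have hsub := hpath γ hγ
  rw [map_prod, map_prod]
  simp only [MvPolynomial.eval₂Hom_X']
  rw [← Finset.prod_sdiff hsub, mul_assoc, ← Finset.prod_mul_distrib]
  rw [Finset.prod_congr rfl (fun i _ => mul_inv_cancel₀ (hXne i)), Finset.prod_const_one,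
    mul_one]

end TwoBridge

end
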